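/- For a tetrahedron with all face areas and all medial parallelogram areas given, the cosine of the dihedral angle X along edge BC is cos X = (Δ₀² + Δ₁² − 4L²)/(2Δ₀Δ₁). -/

import Mathlib

open RealInnerProductSpace

noncomputable def cross3 (u v : EuclideanSpace ℝ (Fin 3)) : EuclideanSpace ℝ (Fin 3) :=
  (WithLp.equiv 2 (Fin 3 → ℝ)).symm
    ![u 1 * v 2 - u 2 * v 1, u 2 * v 0 - u 0 * v 2, u 0 * v 1 - u 1 * v 0]

lemma cross3_norm_comm (u v : EuclideanSpace ℝ (Fin 3)) : ‖cross3 u v‖ = ‖cross3 v u‖ := by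
  rw [← norm_neg]
  congr 1
  simp only [cross3]
  apply (WithLp.equiv 2 (Fin 3 → ℝ)).symm.injective.eq_iff.mpr ?_ |>.symm
  · funext i
    fin_cases i <;> simp <;> ring

lemma key_identity (O A B C : EuclideanSpace ℝ (Fin 3)) :
    ‖cross3 (A - O) (C - B)‖ ^ 2 =
      ‖cross3 (B - A) (C - A)‖ ^ 2 + ‖cross3 (C - O) (B - O)‖ ^ 2 +
        2 * ⟪cross3 (B - A) (C - A), cross3 (C - O) (B - O)⟫ := by
  simp only [← real_inner_self_eq_norm_sq]
  simp only [cross3, PiLp.inner_apply, RCLike.inner_apply, conj_trivial,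
    Fin.sum_univ_three, WithLp.equiv_symm_apply, PiLp.toLp_apply, PiLp.sub_apply,
    Matrix.cons_val_zero, Matrix.cons_val_one, Matrix.head_cons,
    Matrix.cons_val_two, Matrix.tail_cons]
  ring

theorem cos_dihedral_X_from_areas (O A B C : EuclideanSpace ℝ (Fin 3))
    (h : AffineIndependent ℝ ![O, A, B, C]) (Δ₀ Δ₁ L X : ℝ)
    (hΔ₀ : Δ₀ = ‖cross3 (B - A) (C - A)‖ / 2)
    (hΔ₁ : Δ₁ = ‖cross3 (B - O) (C - O)‖ / 2)
    (hL : L = ‖cross3 (A - O) (C - B)‖ / 4)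
    (hX : Real.cos X =
      -(⟪cross3 (B - A) (C - A), cross3 (C - O) (B - O)⟫ /
        (‖cross3 (B - A) (C - A)‖ * ‖cross3 (C - O) (B - O)‖))) :
    Real.cos X = (Δ₀^2 + Δ₁^2 - 4 * L^2) / (2 * Δ₀ * Δ₁) := by
  subst hΔ₀ hΔ₁ hL
  rw [hX, cross3_norm_comm (B - O) (C - O)]
  set nu := ‖cross3 (B - A) (C - A)‖
  set nv := ‖cross3 (C - O) (B - O)‖
  set t := (⟪cross3 (B - A) (C - A), cross3 (C - O) (B - O)⟫ : ℝ)
  have hk : ‖cross3 (A - O) (C - B)‖ ^ 2 = nu ^ 2 + nv ^ 2 + 2 * t := key_identity O A B C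
  have h1 : (nu / 2) ^ 2 + (nv / 2) ^ 2 - 4 * (‖cross3 (A - O) (C - B)‖ / 4) ^ 2 = -t / 2 := by
    rw [div_pow, div_pow, div_pow, hk]; ring
  rw [h1]
  rcases eq_or_ne (nu * nv) 0 with hz | hz
  · rcases mul_eq_zero.mp hz with h0 | h0 <;> simp [h0]
  · field_simp
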